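/- Let I be a prime ideal of the polynomial ring ℂ[Y₀,Y₁,Y₂] which is not principal. Then I contains a nonzero polynomial that is homogeneous with respect to total degree. -/

import Mathlib

open MvPolynomial

noncomputable section StmtAux

abbrev RR := MvPolynomial (Fin 3) ℂ

/-- The map `Yᵢ ↦ Yᵢ · t` from `ℂ[Y]` to `(ℂ[Y])[t]`. -/
def Phi : RR →+* Polynomial RR :=
  MvPolynomial.eval₂Hom (Polynomial.C.comp MvPolynomial.C)
    (fun i => Polynomial.C (MvPolynomial.X i) * Polynomial.X)

lemma Phi_monomial (u : Fin 3 →₀ ℕ) (c : ℂ) :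
    Phi (monomial u c) = Polynomial.monomial u.degree (monomial u c) := by
  classical
  rw [Phi, eval₂Hom_monomial]
  simp only [RingHom.coe_comp, Function.comp_apply]
  rw [Finsupp.prod]
  simp only [mul_pow, ← Polynomial.C_pow]
  rw [Finset.prod_mul_distrib, ← map_prod, ← mul_assoc, ← map_mul,
    Finset.prod_pow_eq_pow_sum]
  rw [MvPolynomial.monomial_eq, Finsupp.prod, Finsupp.degree,
    Polynomial.C_mul_X_pow_eq_monomial]
  rfl

lemma Phi_coeff (p : RR) (n : ℕ) :
    (Phi p).coeff n = homogeneousComponent n p := by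
  induction p using MvPolynomial.induction_on' with
  | monomial u c =>
    rw [Phi_monomial, Polynomial.coeff_monomial,
      homogeneousComponent_of_mem (by
        rw [mem_homogeneousSubmodule]
        exact isHomogeneous_monomial c rfl)]
    by_cases h : u.degree = n <;> simp [h, Ne.symm]
  | add p q hp hq =>
    rw [map_add, Polynomial.coeff_add, hp, hq, map_add]

lemma Phi_eval_one (p : RR) : (Phi p).eval 1 = p := by
  induction p using MvPolynomial.induction_on' with
  | monomial u c => rw [Phi_monomial]; simp
  | add p q hp hq => rw [map_add, Polynomial.eval_add, hp, hq]

lemma Phi_injective : Function.Injective Phi := by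
  intro a b h
  have := congrArg (Polynomial.eval 1) h
  rwa [Phi_eval_one, Phi_eval_one] at this

lemma Phi_ne_zero {p : RR} (hp : p ≠ 0) : Phi p ≠ 0 := by
  intro h
  exact hp (Phi_injective (by rw [h, map_zero]))

/-- If all `t`-coefficients away from `n` vanish, `p` is homogeneous of degree `n`. -/
lemma isHomogeneous_of_Phi (p : RR) (n : ℕ)
    (h : ∀ m, m ≠ n → (Phi p).coeff m = 0) : p.IsHomogeneous n := by
  intro d hd
  have hdeg : (homogeneousComponent d.degree p) ≠ 0 := by
    intro h0
    have := coeff_homogeneousComponent (φ := p) (n := d.degree) d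
    rw [h0, if_pos rfl] at this
    exact hd this.symm
  have : d.degree = n := by
    by_contra hne
    exact hdeg (by rw [← Phi_coeff]; exact h _ hne)
  rw [← this]
  exact (DFunLike.congr_fun Finsupp.degree_eq_weight_one d).symm

lemma Phi_of_isHomogeneous {p : RR} {n : ℕ} (h : p.IsHomogeneous n) :
    Phi p = Polynomial.monomial n p := by
  ext m
  rw [Phi_coeff, Polynomial.coeff_monomial,
    homogeneousComponent_of_mem ((mem_homogeneousSubmodule n p).2 h)]
  by_cases hm : n = m <;> simp [hm, Ne.symm]

lemma isHomogeneous_of_trailing {p : RR} (hp : p ≠ 0)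
    (h : (Phi p).natTrailingDegree = (Phi p).natDegree) :
    p.IsHomogeneous (Phi p).natDegree := by
  apply isHomogeneous_of_Phi
  intro m hm
  rcases lt_or_gt_of_ne hm with hlt | hgt
  · exact Polynomial.coeff_eq_zero_of_lt_natTrailingDegree (by omega)
  · exact Polynomial.coeff_eq_zero_of_natDegree_lt hgt

/-- A divisor of a nonzero homogeneous polynomial is homogeneous. -/
lemma isHomogeneous_of_dvd {f t : RR} (ht0 : t ≠ 0) {n : ℕ}
    (htn : t.IsHomogeneous n) (hdvd : f ∣ t) : ∃ m, f.IsHomogeneous m := by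
  obtain ⟨c, rfl⟩ := hdvd
  have hf : f ≠ 0 := fun h => ht0 (by rw [h, zero_mul])
  have hc : c ≠ 0 := fun h => ht0 (by rw [h, mul_zero])
  have hmul : Phi f * Phi c = Polynomial.monomial n (f * c) := by
    rw [← map_mul]; exact Phi_of_isHomogeneous htn
  have hD : (Phi f).natDegree + (Phi c).natDegree = n := by
    rw [← Polynomial.natDegree_mul (Phi_ne_zero hf) (Phi_ne_zero hc), hmul,
      Polynomial.natDegree_monomial, if_neg ht0]
  have hE : (Phi f).natTrailingDegree + (Phi c).natTrailingDegree = n := by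
    rw [← Polynomial.natTrailingDegree_mul (Phi_ne_zero hf) (Phi_ne_zero hc), hmul,
      Polynomial.natTrailingDegree_monomial ht0]
  have h1 := Polynomial.natTrailingDegree_le_natDegree (Phi f)
  have h2 := Polynomial.natTrailingDegree_le_natDegree (Phi c)
  exact ⟨(Phi f).natDegree, isHomogeneous_of_trailing hf (by omega)⟩

/-- The top homogeneous component. -/
def tc (p : RR) : RR := homogeneousComponent (Phi p).natDegree p

lemma tc_isHomogeneous (p : RR) : (tc p).IsHomogeneous (Phi p).natDegree :=
  homogeneousComponent_isHomogeneous (Phi p).natDegree p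

lemma tc_ne_zero {p : RR} (hp : p ≠ 0) : tc p ≠ 0 := by
  have : tc p = (Phi p).leadingCoeff := by
    rw [Polynomial.leadingCoeff, Phi_coeff, tc]
  rw [this]
  exact Polynomial.leadingCoeff_ne_zero.2 (Phi_ne_zero hp)

lemma Phi_tc (p : RR) : Phi (tc p) = Polynomial.monomial (Phi p).natDegree (tc p) :=
  Phi_of_isHomogeneous (tc_isHomogeneous p)

/-- Degree bounds on the Euclid-step remainder `tc f * g - tc g * f`. -/
lemma euclid_step {f g : RR} (hf : f ≠ 0) (hg : g ≠ 0)
    (hh : tc f * g - tc g * f ≠ 0) :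
    (Phi (tc f * g - tc g * f)).natDegree < (Phi f).natDegree + (Phi g).natDegree ∧
    min ((Phi f).natDegree + (Phi g).natTrailingDegree)
        ((Phi g).natDegree + (Phi f).natTrailingDegree) ≤
      (Phi (tc f * g - tc g * f)).natTrailingDegree := by
  set A := Polynomial.monomial (Phi f).natDegree (tc f) * Phi g with hA
  set B := Polynomial.monomial (Phi g).natDegree (tc g) * Phi f with hB
  have hmonf : (Polynomial.monomial (Phi f).natDegree (tc f) : Polynomial RR) ≠ 0 := by
    simpa [Polynomial.monomial_eq_zero_iff] using tc_ne_zero hf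
  have hmong : (Polynomial.monomial (Phi g).natDegree (tc g) : Polynomial RR) ≠ 0 := by
    simpa [Polynomial.monomial_eq_zero_iff] using tc_ne_zero hg
  have hA0 : A ≠ 0 := mul_ne_zero hmonf (Phi_ne_zero hg)
  have hB0 : B ≠ 0 := mul_ne_zero hmong (Phi_ne_zero hf)
  have hPhih : Phi (tc f * g - tc g * f) = A - B := by
    rw [map_sub, map_mul, map_mul, Phi_tc, Phi_tc, hA, hB]
  have hAB0 : A - B ≠ 0 := by rw [← hPhih]; exact Phi_ne_zero hh
  have hdA : A.natDegree = (Phi f).natDegree + (Phi g).natDegree := by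
    rw [hA, Polynomial.natDegree_mul hmonf (Phi_ne_zero hg),
      Polynomial.natDegree_monomial, if_neg (tc_ne_zero hf)]
  have hdB : B.natDegree = (Phi f).natDegree + (Phi g).natDegree := by
    rw [hB, Polynomial.natDegree_mul hmong (Phi_ne_zero hf),
      Polynomial.natDegree_monomial, if_neg (tc_ne_zero hg), add_comm]
  have htA : A.natTrailingDegree = (Phi f).natDegree + (Phi g).natTrailingDegree := by
    rw [hA, Polynomial.natTrailingDegree_mul hmonf (Phi_ne_zero hg),
      Polynomial.natTrailingDegree_monomial (tc_ne_zero hf)]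
  have htB : B.natTrailingDegree = (Phi g).natDegree + (Phi f).natTrailingDegree := by
    rw [hB, Polynomial.natTrailingDegree_mul hmong (Phi_ne_zero hf),
      Polynomial.natTrailingDegree_monomial (tc_ne_zero hg)]
  constructor
  · -- top degrees cancel
    have hlc : A.leadingCoeff = B.leadingCoeff := by
      rw [hA, hB, Polynomial.leadingCoeff_mul, Polynomial.leadingCoeff_mul,
        Polynomial.leadingCoeff_monomial, Polynomial.leadingCoeff_monomial]
      have hcf : (Phi f).leadingCoeff = tc f := by rw [Polynomial.leadingCoeff, Phi_coeff, tc]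
      have hcg : (Phi g).leadingCoeff = tc g := by rw [Polynomial.leadingCoeff, Phi_coeff, tc]
      rw [hcf, hcg, mul_comm]
    have hdeg : A.degree = B.degree := by
      rw [Polynomial.degree_eq_natDegree hA0, Polynomial.degree_eq_natDegree hB0, hdA, hdB]
    have h2 : (A - B).degree < A.degree := Polynomial.degree_sub_lt hdeg hA0 hlc
    have h3 := Polynomial.natDegree_lt_natDegree hAB0 h2
    rw [hdA] at h3
    rw [hPhih]
    exact h3
  · rw [hPhih]
    apply Polynomial.le_natTrailingDegree hAB0
    intro m hm
    rw [Polynomial.coeff_sub,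
      Polynomial.coeff_eq_zero_of_lt_natTrailingDegree (by omega),
      Polynomial.coeff_eq_zero_of_lt_natTrailingDegree (by omega), sub_zero]

/-- Euclidean algorithm on widths: either some combination of `f` and `g` is a nonzero
homogeneous polynomial, or `f, g` have a common "divisor" up to homogeneous multiples
which is a combination of them. -/
lemma lemB : ∀ N : ℕ, ∀ f g : RR, f ≠ 0 → g ≠ 0 →
    ((Phi f).natDegree - (Phi f).natTrailingDegree) +
      ((Phi g).natDegree - (Phi g).natTrailingDegree) ≤ N →
    (∃ a b : RR, a * f + b * g ≠ 0 ∧ ∃ n, (a * f + b * g).IsHomogeneous n) ∨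
    (∃ p a b s u t v : RR, p = a * f + b * g ∧ p ≠ 0 ∧
      s ≠ 0 ∧ (∃ n, s.IsHomogeneous n) ∧ s * f = p * u ∧
      t ≠ 0 ∧ (∃ m, t.IsHomogeneous m) ∧ t * g = p * v) := by
  intro N
  induction N using Nat.strong_induction_on with
  | _ N IH =>
  intro f g hf hg hN
  by_cases hwf : (Phi f).natTrailingDegree = (Phi f).natDegree
  · left
    exact ⟨1, 0, by simpa using hf, (Phi f).natDegree, by
      simpa using isHomogeneous_of_trailing hf hwf⟩
  by_cases hwg : (Phi g).natTrailingDegree = (Phi g).natDegree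
  · left
    exact ⟨0, 1, by simpa using hg, (Phi g).natDegree, by
      simpa using isHomogeneous_of_trailing hg hwg⟩
  have hEf := Polynomial.natTrailingDegree_le_natDegree (Phi f)
  have hEg := Polynomial.natTrailingDegree_le_natDegree (Phi g)
  rcases le_total
    ((Phi f).natDegree - (Phi f).natTrailingDegree)
    ((Phi g).natDegree - (Phi g).natTrailingDegree) with hle | hle
  · -- reduce g by f
    by_cases hh : tc f * g - tc g * f = 0
    · right
      refine ⟨f, 1, 0, 1, 1, tc f, tc g, by ring, hf, one_ne_zero,
        ⟨0, isHomogeneous_one _ _⟩, by ring, tc_ne_zero hf,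
        ⟨(Phi f).natDegree, tc_isHomogeneous f⟩, ?_⟩
      have : tc f * g = tc g * f := sub_eq_zero.mp hh
      rw [this]; ring
    · obtain ⟨hd, ht⟩ := euclid_step hf hg hh
      have hwidth : ((Phi f).natDegree - (Phi f).natTrailingDegree) +
          ((Phi (tc f * g - tc g * f)).natDegree -
            (Phi (tc f * g - tc g * f)).natTrailingDegree) < N := by
        have := Polynomial.natTrailingDegree_le_natDegree (Phi (tc f * g - tc g * f))
        omega
      rcases IH _ hwidth f (tc f * g - tc g * f) hf hh le_rfl with
        ⟨a, b, hab0, n, habn⟩ | ⟨p, a, b, s, u, t, v, hp, hp0, hs0, hsh, hsf, ht0, hth, htg⟩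
      · left
        refine ⟨a - b * tc g, b * tc f, ?_, n, ?_⟩
        · have : (a - b * tc g) * f + b * tc f * g = a * f + b * (tc f * g - tc g * f) := by
            ring
          rw [this]; exact hab0
        · have : (a - b * tc g) * f + b * tc f * g = a * f + b * (tc f * g - tc g * f) := by
            ring
          rw [this]; exact habn
      · right
        refine ⟨p, a - b * tc g, b * tc f, s, u, s * t * tc f, s * v + tc g * (t * u), ?_,
          hp0, hs0, hsh, hsf, ?_, ?_, ?_⟩
        · rw [hp]; ring
        · exact mul_ne_zero (mul_ne_zero hs0 ht0) (tc_ne_zero hf)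
        · obtain ⟨n₁, hn₁⟩ := hsh; obtain ⟨m₁, hm₁⟩ := hth
          exact ⟨n₁ + m₁ + (Phi f).natDegree, (hn₁.mul hm₁).mul (tc_isHomogeneous f)⟩
        · linear_combination s * htg + tc g * t * hsf
  · -- symmetric: reduce f by g
    by_cases hh : tc g * f - tc f * g = 0
    · right
      refine ⟨g, 0, 1, tc g, tc f, 1, 1, by ring, hg, tc_ne_zero hg,
        ⟨(Phi g).natDegree, tc_isHomogeneous g⟩, ?_, one_ne_zero,
        ⟨0, isHomogeneous_one _ _⟩, by ring⟩
      have : tc g * f = tc f * g := sub_eq_zero.mp hh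
      rw [this]; ring
    · obtain ⟨hd, ht⟩ := euclid_step hg hf hh
      have hwidth : ((Phi g).natDegree - (Phi g).natTrailingDegree) +
          ((Phi (tc g * f - tc f * g)).natDegree -
            (Phi (tc g * f - tc f * g)).natTrailingDegree) < N := by
        have := Polynomial.natTrailingDegree_le_natDegree (Phi (tc g * f - tc f * g))
        omega
      rcases IH _ hwidth g (tc g * f - tc f * g) hg hh le_rfl with
        ⟨a, b, hab0, n, habn⟩ | ⟨p, a, b, s, u, t, v, hp, hp0, hs0, hsh, hsg, ht0, hth, htf⟩
      · left
        refine ⟨b * tc g, a - b * tc f, ?_, n, ?_⟩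
        · have : b * tc g * f + (a - b * tc f) * g = a * g + b * (tc g * f - tc f * g) := by
            ring
          rw [this]; exact hab0
        · have : b * tc g * f + (a - b * tc f) * g = a * g + b * (tc g * f - tc f * g) := by
            ring
          rw [this]; exact habn
      · right
        refine ⟨p, b * tc g, a - b * tc f, s * t * tc g, s * v + tc f * (t * u), s, u, ?_,
          hp0, ?_, ?_, ?_, hs0, hsh, hsg⟩
        · rw [hp]; ring
        · exact mul_ne_zero (mul_ne_zero hs0 ht0) (tc_ne_zero hg)
        · obtain ⟨n₁, hn₁⟩ := hsh; obtain ⟨m₁, hm₁⟩ := hth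
          exact ⟨n₁ + m₁ + (Phi g).natDegree, (hn₁.mul hm₁).mul (tc_isHomogeneous g)⟩
        · linear_combination s * htf + tc f * t * hsg

end StmtAux

/-- a non-principal prime ideal of `ℂ[Y₀,Y₁,Y₂]` contains a nonzero polynomial
which is homogeneous with respect to total degree. -/
theorem stmt_17 (I : Ideal (MvPolynomial (Fin 3) ℂ)) (hI : I.IsPrime)
    (hnp : ¬ I.IsPrincipal) :
    ∃ p ∈ I, p ≠ 0 ∧ ∃ n : ℕ, p.IsHomogeneous n := by
  classical
  -- I is nonzero
  have hIbot : I ≠ ⊥ := by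
    rintro rfl
    exact hnp ⟨0, (Submodule.span_zero_singleton _).symm⟩
  obtain ⟨x, hxI, hx0⟩ := Submodule.exists_mem_ne_zero_of_ne_bot hIbot
  -- find a prime element of I
  obtain ⟨fs, hfs, hassoc⟩ := UniqueFactorizationMonoid.exists_prime_factors x hx0
  have hprodI : fs.prod ∈ I := by
    obtain ⟨u, hu⟩ := hassoc
    have : fs.prod = x * (u⁻¹ : (MvPolynomial (Fin 3) ℂ)ˣ) := by
      rw [← hu, mul_assoc]; simp
    rw [this]
    exact I.mul_mem_right _ hxI
  obtain ⟨f, hfmem, hfI⟩ := (hI.multiset_prod_mem_iff_exists_mem fs).1 hprodI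
  have hfprime : Prime f := hfs f hfmem
  have hf0 : f ≠ 0 := hfprime.ne_zero
  -- if f is homogeneous we are done
  by_cases hfhom : ∃ n, f.IsHomogeneous n
  · exact ⟨f, hfI, hf0, hfhom⟩
  -- otherwise find g ∈ I not divisible by f
  have hlt : Ideal.span {f} < I := by
    refine lt_of_le_of_ne (by simpa [Ideal.span_le] using hfI) ?_
    intro h
    exact hnp (h ▸ ⟨f, rfl⟩)
  obtain ⟨g, hgI, hgns⟩ := SetLike.exists_of_lt hlt
  have hfg : ¬ f ∣ g := fun h => hgns (Ideal.mem_span_singleton.2 h)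
  have hg0 : g ≠ 0 := fun h => hfg (h ▸ dvd_zero f)
  -- run the Euclidean algorithm
  rcases lemB _ f g hf0 hg0 le_rfl with
    ⟨a, b, hab0, n, habn⟩ | ⟨p, a, b, s, u, t, v, hp, hp0, hs0, hsh, hsf, ht0, hth, htg⟩
  · exact ⟨a * f + b * g, I.add_mem (I.mul_mem_left a hfI) (I.mul_mem_left b hgI),
      hab0, n, habn⟩
  · have hpI : p ∈ I := by
      rw [hp]
      exact I.add_mem (I.mul_mem_left a hfI) (I.mul_mem_left b hgI)
    -- p divides s * f
    have hpdvd : p ∣ s * f := ⟨u, hsf⟩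
    obtain ⟨d₁, d₂, hd₁, hd₂, hpd⟩ := exists_dvd_and_dvd_of_dvd_mul hpdvd
    obtain ⟨e, he⟩ := hd₂
    rcases hfprime.irreducible.isUnit_or_isUnit he with hunit | hunit
    · -- d₂ is a unit, so p ∣ s, hence s ∈ I is homogeneous and nonzero
      have hps : p ∣ s := by
        rw [hpd, hunit.mul_right_dvd]
        exact hd₁
      obtain ⟨w, hw⟩ := hps
      obtain ⟨n, hn⟩ := hsh
      exact ⟨s, hw ▸ I.mul_mem_right w hpI, hs0, n, hn⟩
    · -- f ∣ d₂ ∣ p ∣ t * g, so f ∣ t or f ∣ g; both impossible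
      obtain ⟨eu, rfl⟩ := hunit
      have hfd₂ : f ∣ d₂ := ⟨(↑eu⁻¹ : _), by rw [he, Units.mul_inv_cancel_right]⟩
      have hfp : f ∣ p := hfd₂.trans ⟨d₁, by rw [hpd, mul_comm]⟩
      have hfdvd : f ∣ t * g := hfp.trans ⟨v, htg⟩
      rcases hfprime.dvd_or_dvd hfdvd with hft | hfgd
      · obtain ⟨m, hm⟩ := hth
        exact absurd (isHomogeneous_of_dvd ht0 hm hft) hfhom
      · exact absurd hfgd hfg
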